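/- Let X be a graph on v vertices whose adjacency matrix has spectral decomposition A = Σ_θ θE_θ. Let D be the diagonal of X□X. Then the D,D-submatrix of the walk generating matrix of X□X satisfies W_{D,D}(X□X, t) = Σ_{θ,τ} (1 − t(θ+τ))^{-1} E_θ ∘ E_τ, where ∘ is the entrywise (Schur) product. -/

import Mathlib

open Matrix Kronecker

lemma geom_inv (a : ℝ) : ((1 - PowerSeries.C a * PowerSeries.X)⁻¹ : PowerSeries ℝ) =
    PowerSeries.mk fun r => a ^ r := by
  rw [PowerSeries.inv_eq_iff_mul_eq_one (by simp)]
  ext m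
  rcases m with _ | m
  · simp
  · rw [mul_sub, mul_one, map_sub, PowerSeries.coeff_mk,
      mul_comm (PowerSeries.C a) PowerSeries.X, ← mul_assoc,
      PowerSeries.coeff_mul_C, PowerSeries.coeff_succ_mul_X, PowerSeries.coeff_mk]
    simp [pow_succ]

lemma sum_kron {m : ℕ} {ι κ : Type*} [Fintype ι] [Fintype κ]
    (f : ι → Matrix (Fin m) (Fin m) ℝ) (g : κ → Matrix (Fin m) (Fin m) ℝ) :
    (∑ i, f i) ⊗ₖ (∑ j, g j) = ∑ i, ∑ j, f i ⊗ₖ g j := by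
  ext ⟨a, b⟩ ⟨c, d⟩
  simp [Matrix.kroneckerMap_apply, Matrix.sum_apply, Finset.sum_mul_sum]

lemma kron_pow {v n : ℕ} (θ : Fin n → ℝ) (E : Fin n → Matrix (Fin v) (Fin v) ℝ)
    (A : Matrix (Fin v) (Fin v) ℝ)
    (hdecomp : A = ∑ i, θ i • E i)
    (hproj : ∀ i j, E i * E j = if i = j then E i else 0)
    (hsum : ∑ i, E i = 1) (r : ℕ) :
    (A ⊗ₖ (1 : Matrix (Fin v) (Fin v) ℝ) + (1 : Matrix (Fin v) (Fin v) ℝ) ⊗ₖ A) ^ r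
      = ∑ i, ∑ j, (θ i + θ j) ^ r • (E i ⊗ₖ E j) := by
  have hM : A ⊗ₖ (1 : Matrix (Fin v) (Fin v) ℝ) + (1 : Matrix (Fin v) (Fin v) ℝ) ⊗ₖ A
      = ∑ i, ∑ j, (θ i + θ j) • (E i ⊗ₖ E j) := by
    conv_lhs => rw [hdecomp, ← hsum]
    rw [sum_kron, sum_kron, ← Finset.sum_add_distrib]
    refine Finset.sum_congr rfl fun i _ => ?_
    rw [← Finset.sum_add_distrib]
    refine Finset.sum_congr rfl fun j _ => ?_
    rw [Matrix.smul_kronecker, Matrix.kronecker_smul, add_smul]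
  induction r with
  | zero =>
    simp only [pow_zero, pow_zero, one_smul]
    rw [← sum_kron, hsum, Matrix.one_kronecker_one]
  | succ r ih =>
    rw [pow_succ, ih, hM, Finset.sum_mul]
    refine Finset.sum_congr rfl fun i _ => ?_
    rw [Finset.sum_mul]
    refine Finset.sum_congr rfl fun j _ => ?_
    rw [Finset.mul_sum]
    rw [Finset.sum_eq_single i ?_ (by simp)]
    · rw [Finset.mul_sum, Finset.sum_eq_single j ?_ (by simp)]
      · rw [smul_mul_assoc, mul_smul_comm, ← Matrix.mul_kronecker_mul, hproj, hproj]
        simp [smul_smul, pow_succ, mul_comm]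
      · intro l _ hl
        rw [smul_mul_assoc, mul_smul_comm, ← Matrix.mul_kronecker_mul, hproj, hproj,
          if_neg (Ne.symm hl)]
        simp
    · intro k _ hk
      rw [Finset.mul_sum]
      refine Finset.sum_eq_zero fun l _ => ?_
      rw [smul_mul_assoc, mul_smul_comm, ← Matrix.mul_kronecker_mul, hproj i k,
        if_neg (Ne.symm hk)]
      simp

/-- If `A = Σ_θ θ E_θ` is the spectral decomposition of the adjacency matrix of `X`,
and `D` is the diagonal of `X □ X`, then the walk generating matrix of `X □ X`
restricted to `D` satisfies
`W_{D,D}(X □ X, t) = Σ_{θ,τ} (1 − t(θ+τ))⁻¹ E_θ ∘ E_τ` (Schur product),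
as an identity of formal power series. -/
theorem walk_generating_diagonal_schur {v n : ℕ} (X : SimpleGraph (Fin v))
    [DecidableRel X.Adj] (θ : Fin n → ℝ) (E : Fin n → Matrix (Fin v) (Fin v) ℝ)
    (hdecomp : X.adjMatrix ℝ = ∑ i, θ i • E i)
    (hproj : ∀ i j, E i * E j = if i = j then E i else 0)
    (hsymm : ∀ i, (E i)ᵀ = E i)
    (hsum : ∑ i, E i = 1) :
    ∀ p q : Fin v,
      PowerSeries.mk (fun r =>
          (((X.adjMatrix ℝ) ⊗ₖ (1 : Matrix (Fin v) (Fin v) ℝ)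
              + (1 : Matrix (Fin v) (Fin v) ℝ) ⊗ₖ (X.adjMatrix ℝ)) ^ r) (p, p) (q, q))
        = ∑ i, ∑ j,
            PowerSeries.C (Matrix.hadamard (E i) (E j) p q)
              * (1 - PowerSeries.C (θ i + θ j) * PowerSeries.X)⁻¹ := by
  intro p q
  ext r
  simp only [PowerSeries.coeff_mk, kron_pow θ E _ hdecomp hproj hsum, Matrix.sum_apply,
    Matrix.smul_apply, Matrix.kroneckerMap_apply, smul_eq_mul, map_sum, geom_inv,
    PowerSeries.coeff_C_mul, PowerSeries.coeff_mk, Matrix.hadamard_apply]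
  exact Finset.sum_congr rfl fun i _ => Finset.sum_congr rfl fun j _ => by ring
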